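/- Let α, ε > 0, let w̃(k) = Σ_{m=1}^∞ (1 − cos(k m))/m^{1+α}, define Ω²(k) = 4 ε w̃(k) ( ε w̃(k) − A² ) for A > 0, and set A₀ = (4 ε (1 − 2^{−(1+α)}) ζ(1+α))^{1/2}. If 0 < A < A₀, then there exists a unique k_max ∈ (0, π) with w̃(k_max) = A²/(2ε), and min_{k ∈ [−π, π]} Ω²(k) = Ω²(k_max) = Ω²(−k_max) = −A⁴. -/

import Mathlib

open scoped BigOperators

noncomputable section

/-- The dispersion symbol `w̃(k) = Σ_{m=1}^∞ (1 − cos(km))/m^{1+α}`. -/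
def wt (α k : ℝ) : ℝ :=
  ∑' m : ℕ, (1 - Real.cos (k * ((m + 1 : ℕ) : ℝ))) / ((m + 1 : ℕ) : ℝ) ^ (1 + α)

/-- The Riemann zeta function of a real argument `s > 1`, as `Σ_{n=1}^∞ n^{−s}`. -/
def zetaR (s : ℝ) : ℝ := ∑' n : ℕ, 1 / ((n + 1 : ℕ) : ℝ) ^ s

/-- `Ω²(k) = 4 ε w̃(k) (ε w̃(k) − A²)`. -/
def Om2 (α ε A k : ℝ) : ℝ := 4 * ε * wt α k * (ε * wt α k - A ^ 2)

/-- The threshold amplitude `A₀ = (4ε(1 − 2^{−(1+α)}) ζ(1+α))^{1/2}`. -/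
def A0 (α ε : ℝ) : ℝ := Real.sqrt (4 * ε * (1 - (2 : ℝ) ^ (-(1 + α))) * zetaR (1 + α))

open Real MeasureTheory Set
open scoped ENNReal

namespace OmAux

lemma summable_zeta {s : ℝ} (hs : 1 < s) :
    Summable (fun n : ℕ => 1 / ((n + 1 : ℕ) : ℝ) ^ s) := by
  have h := (Real.summable_one_div_nat_rpow (p := s)).2 hs
  have h2 := (summable_nat_add_iff 1).2 h
  simpa using h2

lemma abs_term_le (c x : ℝ) (hx : 0 < x) :
    ‖(1 - Real.cos c) / x‖ ≤ 2 * (1 / x) := by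
  rw [Real.norm_eq_abs, abs_div, abs_of_nonneg (by nlinarith [Real.cos_le_one c]),
    abs_of_pos hx, div_le_iff₀ hx]
  have := Real.neg_one_le_cos c
  field_simp
  nlinarith

lemma summable_wt (α k : ℝ) (hα : 0 < α) :
    Summable (fun m : ℕ =>
      (1 - Real.cos (k * ((m + 1 : ℕ) : ℝ))) / ((m + 1 : ℕ) : ℝ) ^ (1 + α)) := by
  refine Summable.of_norm_bounded ((summable_zeta (show (1:ℝ) < 1+α by linarith)).mul_left 2) ?_
  intro m
  exact abs_term_le _ _ (by positivity)

lemma wt_nonneg (α k : ℝ) : 0 ≤ wt α k := by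
  apply tsum_nonneg
  intro m
  have := Real.cos_le_one (k * ((m + 1 : ℕ) : ℝ))
  apply div_nonneg (by linarith) (by positivity)

lemma wt_zero (α : ℝ) : wt α 0 = 0 := by
  simp [wt]

lemma wt_neg (α k : ℝ) : wt α (-k) = wt α k := by
  simp [wt]

lemma continuous_wt (α : ℝ) (hα : 0 < α) : Continuous (wt α) := by
  have : Continuous fun k => ∑' m : ℕ,
      (1 - Real.cos (k * ((m + 1 : ℕ) : ℝ))) / ((m + 1 : ℕ) : ℝ) ^ (1 + α) := by
    refine continuous_tsum (fun m => ?_) ((summable_zeta (show (1:ℝ) < 1+α by linarith)).mul_left 2)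
      (fun m x => ?_)
    · fun_prop
    · exact abs_term_le _ _ (by positivity)
  exact this


lemma summable_odd {s : ℝ} (hs : 1 < s) :
    Summable (fun j : ℕ => 1 / ((2 * j + 1 : ℕ) : ℝ) ^ s) := by
  refine Summable.of_nonneg_of_le (fun j => by positivity) (fun j => ?_) (summable_zeta hs)
  apply div_le_div_of_nonneg_left one_pos.le (by positivity)
  apply Real.rpow_le_rpow (by positivity) ?_ (by linarith)
  push_cast; linarith

lemma summable_even {s : ℝ} (hs : 1 < s) :
    Summable (fun j : ℕ => 1 / ((2 * j + 2 : ℕ) : ℝ) ^ s) := by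
  refine Summable.of_nonneg_of_le (fun j => by positivity) (fun j => ?_) (summable_zeta hs)
  apply div_le_div_of_nonneg_left one_pos.le (by positivity)
  apply Real.rpow_le_rpow (by positivity) ?_ (by linarith)
  push_cast; linarith

lemma even_sum_eq {s : ℝ} (hs : 1 < s) :
    ∑' j : ℕ, 1 / ((2 * j + 2 : ℕ) : ℝ) ^ s = (2:ℝ) ^ (-s) * zetaR s := by
  rw [zetaR, ← tsum_mul_left]
  apply tsum_congr
  intro j
  have h1 : ((2 * j + 2 : ℕ) : ℝ) = 2 * ((j + 1 : ℕ) : ℝ) := by push_cast; ring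
  rw [h1, Real.mul_rpow (by norm_num) (by positivity), Real.rpow_neg (by norm_num)]
  field_simp

lemma odd_sum_eq {s : ℝ} (hs : 1 < s) :
    ∑' j : ℕ, 1 / ((2 * j + 1 : ℕ) : ℝ) ^ s = (1 - (2:ℝ) ^ (-s)) * zetaR s := by
  have hso : Summable (fun j : ℕ => 1 / ((2 * j + 1 + 1 : ℕ) : ℝ) ^ s) := by
    have := summable_even hs
    apply this.congr
    intro j
    congr 2
  have hsplit := tsum_even_add_odd (f := fun n : ℕ => 1 / ((n + 1 : ℕ) : ℝ) ^ s)
    (summable_odd hs) hso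
  have h2 : ∑' j : ℕ, 1 / ((2 * j + 1 + 1 : ℕ) : ℝ) ^ s = (2:ℝ) ^ (-s) * zetaR s := by
    rw [← even_sum_eq hs]
  have : (∑' j : ℕ, 1 / ((2 * j + 1 : ℕ) : ℝ) ^ s) + (2:ℝ) ^ (-s) * zetaR s = zetaR s := by
    rw [← h2, zetaR, ← hsplit]
  linarith

lemma zetaR_pos {s : ℝ} (hs : 1 < s) : 0 < zetaR s := by
  have : (0:ℝ) < 1 / ((0 + 1 : ℕ) : ℝ) ^ s := by norm_num
  exact Summable.tsum_pos (summable_zeta hs) (fun n => by positivity) 0 this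

lemma wt_pi (α : ℝ) (hα : 0 < α) :
    wt α Real.pi = 2 * (1 - (2:ℝ) ^ (-(1 + α))) * zetaR (1 + α) := by
  have hs : (1:ℝ) < 1 + α := by linarith
  have hterm : ∀ m : ℕ, (1 - Real.cos (Real.pi * ((m + 1 : ℕ) : ℝ))) / ((m + 1 : ℕ) : ℝ) ^ (1 + α)
      = (1 - (-1:ℝ) ^ (m + 1)) / ((m + 1 : ℕ) : ℝ) ^ (1 + α) := by
    intro m
    have : Real.cos (Real.pi * ((m + 1 : ℕ) : ℝ)) = (-1:ℝ) ^ (m + 1) := by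
      rw [mul_comm]
      simpa using Real.cos_add_nat_mul_pi 0 (m + 1)
    rw [this]
  have he : ∀ j : ℕ, (1 - (-1:ℝ) ^ (2*j + 1)) / ((2*j + 1 : ℕ) : ℝ) ^ (1 + α)
      = 2 * (1 / ((2*j+1:ℕ):ℝ) ^ (1 + α)) := by
    intro j
    rw [Odd.neg_one_pow ⟨j, by ring⟩]
    ring
  have ho : ∀ j : ℕ, (1 - (-1:ℝ) ^ (2*j + 1 + 1)) / ((2*j + 1 + 1 : ℕ) : ℝ) ^ (1 + α) = 0 := by
    intro j
    rw [Even.neg_one_pow ⟨j+1, by ring⟩]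
    simp
  have hse : Summable (fun j : ℕ => (1 - (-1:ℝ) ^ (2*j + 1)) / ((2*j + 1 : ℕ) : ℝ) ^ (1 + α)) := by
    simp only [he]; exact (summable_odd hs).mul_left 2
  have hso : Summable (fun j : ℕ => (1 - (-1:ℝ) ^ (2*j + 1 + 1)) / ((2*j + 1 + 1 : ℕ) : ℝ) ^ (1 + α)) := by
    simp only [ho]; exact summable_zero
  have hsplit := tsum_even_add_odd
    (f := fun m : ℕ => (1 - (-1:ℝ) ^ (m+1)) / ((m + 1 : ℕ) : ℝ) ^ (1 + α)) hse hso
  rw [wt, tsum_congr hterm, ← hsplit, tsum_congr he, tsum_congr ho, tsum_zero, add_zero,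
    tsum_mul_left, odd_sum_eq hs]
  ring


open Complex in
lemma tsum_cos_geom (θ : ℝ) {r : ℝ} (h0 : 0 < r) (h1 : r < 1) :
    ∑' m : ℕ, Real.cos (θ * ((m:ℝ) + 1)) * r ^ (m + 1)
      = (r * Real.cos θ - r ^ 2) / (1 - 2 * r * Real.cos θ + r ^ 2) := by
  set z : ℂ := (r : ℂ) * Complex.exp (θ * I) with hz
  have hnz : ‖z‖ = r := by
    rw [hz, norm_mul, Complex.norm_exp_ofReal_mul_I, mul_one, Complex.norm_real,
      Real.norm_eq_abs, abs_of_pos h0]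
  have hlt : ‖z‖ < 1 := by rw [hnz]; exact h1
  have hsum : Summable (fun m : ℕ => z ^ (m + 1)) := by
    have := summable_geometric_of_norm_lt_one hlt
    simpa [pow_succ, mul_comm] using this.mul_left z
  have hre : ∀ m : ℕ, (z ^ (m + 1)).re = Real.cos (θ * ((m:ℝ) + 1)) * r ^ (m + 1) := by
    intro m
    have harg : ((m + 1 : ℕ) : ℂ) * (θ * I) = ((((m:ℝ) + 1) * θ : ℝ) : ℂ) * I := by
      push_cast; ring
    rw [hz, mul_pow, ← Complex.exp_nat_mul, harg,
      show ((r:ℂ)) ^ (m+1) = ((r ^ (m+1) : ℝ) : ℂ) by push_cast; ring,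
      Complex.re_ofReal_mul, Complex.exp_ofReal_mul_I_re]
    ring
  have h2 : ∑' m : ℕ, z ^ (m+1) = z / (1 - z) := by
    have hg := tsum_geometric_of_norm_lt_one hlt
    calc ∑' m : ℕ, z ^ (m+1) = ∑' m : ℕ, z ^ m * z :=
          tsum_congr fun m => by rw [pow_succ]
      _ = (∑' m : ℕ, z ^ m) * z := tsum_mul_right
      _ = (1 - z)⁻¹ * z := by rw [hg]
      _ = z / (1 - z) := by rw [div_eq_mul_inv, mul_comm]
  have h3 : ∑' m : ℕ, Real.cos (θ * ((m:ℝ) + 1)) * r ^ (m + 1) = (z / (1-z)).re := by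
    rw [← h2, Complex.re_tsum hsum]
    exact tsum_congr fun m => (hre m).symm
  rw [h3]
  have hre2 : z.re = r * Real.cos θ := by
    simp [hz, Complex.mul_re, Complex.exp_ofReal_mul_I_re, Complex.exp_ofReal_mul_I_im]
  have him2 : z.im = r * Real.sin θ := by
    simp [hz, Complex.mul_im, Complex.exp_ofReal_mul_I_re, Complex.exp_ofReal_mul_I_im]
  rw [Complex.div_re, Complex.normSq_apply]
  simp only [Complex.sub_re, Complex.sub_im, Complex.one_re, Complex.one_im, hre2, him2]
  have hsc := Real.sin_sq_add_cos_sq θ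
  have hden : (1 - r * Real.cos θ) * (1 - r * Real.cos θ)
        + (0 - r * Real.sin θ) * (0 - r * Real.sin θ)
      = 1 - 2 * r * Real.cos θ + r ^ 2 := by nlinarith
  rw [hden, ← add_div]
  congr 1
  nlinarith

def Fk (k t : ℝ) : ℝ :=
  ∑' m : ℕ, (1 - Real.cos (k * ((m:ℝ) + 1))) * Real.exp (-(t * ((m:ℝ) + 1)))

lemma exp_pow (t : ℝ) (m : ℕ) :
    Real.exp (-(t * ((m:ℝ) + 1))) = Real.exp (-t) ^ (m + 1) := by
  rw [← Real.exp_nat_mul]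
  congr 1
  push_cast; ring

lemma summable_Fk (k t : ℝ) (ht : 0 < t) :
    Summable (fun m : ℕ =>
      (1 - Real.cos (k * ((m:ℝ) + 1))) * Real.exp (-(t * ((m:ℝ) + 1)))) := by
  have hr1 : Real.exp (-t) < 1 := Real.exp_lt_one_iff.2 (by linarith)
  have hgeo : Summable (fun m : ℕ => 2 * Real.exp (-t) ^ (m + 1)) := by
    have := summable_geometric_of_lt_one (Real.exp_pos (-t)).le hr1
    exact ((this.mul_right (Real.exp (-t))).mul_left 2).congr fun m => by
      rw [pow_succ]
  refine Summable.of_nonneg_of_le (fun m => ?_) (fun m => ?_) hgeo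
  · have := Real.cos_le_one (k * ((m:ℝ) + 1))
    have := Real.exp_pos (-(t * ((m:ℝ) + 1)))
    nlinarith
  · rw [exp_pow]
    have h2 : 1 - Real.cos (k * ((m:ℝ) + 1)) ≤ 2 := by
      have := Real.neg_one_le_cos (k * ((m:ℝ) + 1)); linarith
    have := pow_pos (Real.exp_pos (-t)) (m + 1)
    nlinarith

lemma summable_cos_geom (k t : ℝ) (ht : 0 < t) :
    Summable (fun m : ℕ => Real.cos (k * ((m:ℝ) + 1)) * Real.exp (-t) ^ (m + 1)) := by
  have hr1 : Real.exp (-t) < 1 := Real.exp_lt_one_iff.2 (by linarith)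
  have hgeo : Summable (fun m : ℕ => Real.exp (-t) ^ (m + 1)) := by
    exact ((summable_geometric_of_lt_one (Real.exp_pos (-t)).le hr1).mul_right
      (Real.exp (-t))).congr fun m => by rw [pow_succ]
  refine Summable.of_norm_bounded hgeo fun m => ?_
  rw [norm_mul, Real.norm_eq_abs, Real.norm_eq_abs,
    abs_of_pos (pow_pos (Real.exp_pos (-t)) (m+1))]
  have h1 := abs_cos_le_one (k * ((m:ℝ) + 1))
  have := pow_pos (Real.exp_pos (-t)) (m + 1)
  nlinarith [abs_nonneg (Real.cos (k * ((m:ℝ) + 1)))]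

lemma Fk_eq (k t : ℝ) (ht : 0 < t) :
    Fk k t = Real.exp (-t) / (1 - Real.exp (-t))
      - (Real.exp (-t) * Real.cos k - Real.exp (-t) ^ 2)
        / (1 - 2 * Real.exp (-t) * Real.cos k + Real.exp (-t) ^ 2) := by
  set r := Real.exp (-t) with hr
  have hr0 : 0 < r := Real.exp_pos _
  have hr1 : r < 1 := Real.exp_lt_one_iff.2 (by linarith)
  have hgeo : Summable (fun m : ℕ => r ^ (m + 1)) :=
    ((summable_geometric_of_lt_one hr0.le hr1).mul_right r).congr fun m => by rw [pow_succ]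
  have h1 : Fk k t = ∑' m : ℕ, (r ^ (m+1) - Real.cos (k * ((m:ℝ) + 1)) * r ^ (m + 1)) := by
    rw [Fk]
    exact tsum_congr fun m => by rw [exp_pow]; ring
  rw [h1, Summable.tsum_sub hgeo (summable_cos_geom k t ht)]
  have h2 : ∑' m : ℕ, r ^ (m + 1) = r / (1 - r) := by
    calc ∑' m : ℕ, r ^ (m+1) = (∑' m : ℕ, r ^ m) * r :=
          by rw [← tsum_mul_right]; exact tsum_congr fun m => by rw [pow_succ]
      _ = (1 - r)⁻¹ * r := by rw [tsum_geometric_of_lt_one hr0.le hr1]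
      _ = r / (1 - r) := by rw [div_eq_mul_inv, mul_comm]
  rw [h2, tsum_cos_geom k hr0 hr1]

lemma Fk_lt {k1 k2 : ℝ} (t : ℝ) (h0 : 0 ≤ k1) (h12 : k1 < k2) (h2 : k2 ≤ Real.pi)
    (ht : 0 < t) : Fk k1 t < Fk k2 t := by
  have hc : Real.cos k2 < Real.cos k1 := Real.cos_lt_cos_of_nonneg_of_le_pi h0 h2 h12
  have hc1 : Real.cos k1 ≤ 1 := Real.cos_le_one _
  have hc2 : -1 ≤ Real.cos k2 := Real.neg_one_le_cos _
  set r := Real.exp (-t) with hr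
  have hr0 : 0 < r := Real.exp_pos _
  have hr1 : r < 1 := Real.exp_lt_one_iff.2 (by linarith)
  rw [Fk_eq k1 t ht, Fk_eq k2 t ht]
  have hD1 : 0 < 1 - 2 * r * Real.cos k1 + r ^ 2 := by nlinarith
  have hD2 : 0 < 1 - 2 * r * Real.cos k2 + r ^ 2 := by nlinarith
  have key : (r * Real.cos k2 - r ^ 2) / (1 - 2 * r * Real.cos k2 + r ^ 2)
      < (r * Real.cos k1 - r ^ 2) / (1 - 2 * r * Real.cos k1 + r ^ 2) := by
    rw [div_lt_div_iff₀ hD2 hD1]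
    nlinarith [mul_pos (mul_pos hr0 (sub_pos.mpr hc)) (sub_pos.mpr (show r ^ 2 < 1 by nlinarith))]
  linarith

def phi (α k t : ℝ) : ℝ≥0∞ :=
  ∑' m : ℕ, ENNReal.ofReal
    ((1 - Real.cos (k * ((m:ℝ) + 1))) * Real.exp (-(t * ((m:ℝ) + 1))) * t ^ α)

lemma phi_eq (α k t : ℝ) (hα : 0 < α) (ht : 0 < t) :
    phi α k t = ENNReal.ofReal (Fk k t * t ^ α) := by
  have hnn : ∀ m : ℕ, (0:ℝ) ≤
      (1 - Real.cos (k * ((m:ℝ) + 1))) * Real.exp (-(t * ((m:ℝ) + 1))) * t ^ α := by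
    intro m
    have h1 := Real.cos_le_one (k * ((m:ℝ) + 1))
    have h2 := (Real.exp_pos (-(t * ((m:ℝ) + 1)))).le
    have h3 : (0:ℝ) ≤ t ^ α := Real.rpow_nonneg ht.le α
    exact mul_nonneg (mul_nonneg (by linarith) h2) h3
  simp only [phi, Fk]
  rw [← tsum_mul_right, ENNReal.ofReal_tsum_of_nonneg hnn
    ((summable_Fk k t ht).mul_right _)]

lemma measurable_phi (α k : ℝ) (hα : 0 < α) : Measurable (phi α k) := by
  apply Measurable.ennreal_tsum
  intro m
  apply Measurable.ennreal_ofReal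
  apply Measurable.mul
  · apply Measurable.const_mul
    exact (Real.continuous_exp.comp (continuous_id.mul continuous_const).neg).measurable
  · exact (Real.continuous_rpow_const hα.le).measurable

lemma lint_term (α : ℝ) (hα : 0 < α) {c n : ℝ} (hc : 0 ≤ c) (hn : 0 < n) :
    ∫⁻ t in Set.Ioi 0, ENNReal.ofReal (c * Real.exp (-(t * n)) * t ^ α)
      = ENNReal.ofReal (c * ((1 / n) ^ (1 + α) * Real.Gamma (1 + α))) := by
  have hint : IntegrableOn (fun t : ℝ => c * Real.exp (-(t * n)) * t ^ α) (Set.Ioi 0) := by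
    have h : IntegrableOn (fun x : ℝ => c * (x ^ α * Real.exp (-n * x ^ (1:ℝ)))) (Set.Ioi 0) :=
      (integrableOn_rpow_mul_exp_neg_mul_rpow (s := α) (p := 1) (b := n)
        (by linarith) one_pos hn).const_mul c
    refine IntegrableOn.congr_fun h (fun x hx => ?_) measurableSet_Ioi
    simp only [Real.rpow_one]
    rw [neg_mul, mul_comm n x]
    ring
  have hval : ∫ t in Set.Ioi 0, c * Real.exp (-(t * n)) * t ^ α
      = c * ((1 / n) ^ (1 + α) * Real.Gamma (1 + α)) := by
    have h := Real.integral_rpow_mul_exp_neg_mul_Ioi (show (0:ℝ) < 1 + α by linarith) hn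
    rw [show (1:ℝ) + α - 1 = α by ring] at h
    calc ∫ t in Set.Ioi 0, c * Real.exp (-(t * n)) * t ^ α
        = ∫ t in Set.Ioi 0, c * (t ^ α * Real.exp (-(n * t))) := by
          apply setIntegral_congr_fun measurableSet_Ioi
          intro x hx
          simp only []
          rw [mul_comm n x]
          ring
      _ = c * ∫ t in Set.Ioi 0, t ^ α * Real.exp (-(n * t)) := by
          rw [integral_const_mul]
      _ = c * ((1 / n) ^ (1 + α) * Real.Gamma (1 + α)) := by rw [h]
  rw [← hval]
  rw [← ofReal_integral_eq_lintegral_ofReal hint]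
  filter_upwards [ae_restrict_mem measurableSet_Ioi] with x hx
  have h1 := (Real.exp_pos (-(x * n))).le
  have h3 : (0:ℝ) ≤ x ^ α := Real.rpow_nonneg (le_of_lt hx) α
  positivity

lemma lint_phi (α k : ℝ) (hα : 0 < α) :
    ∫⁻ t in Set.Ioi 0, phi α k t
      = ENNReal.ofReal (Real.Gamma (1 + α) * wt α k) := by
  have hs1 : (1:ℝ) < 1 + α := by linarith
  have hmeas : ∀ m : ℕ, AEMeasurable (fun t : ℝ => ENNReal.ofReal
      ((1 - Real.cos (k * ((m:ℝ) + 1))) * Real.exp (-(t * ((m:ℝ) + 1))) * t ^ α))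
      (volume.restrict (Set.Ioi 0)) := by
    intro m
    apply Measurable.aemeasurable
    apply Measurable.ennreal_ofReal
    apply Measurable.mul
    · apply Measurable.const_mul
      exact (Real.continuous_exp.comp (continuous_id.mul continuous_const).neg).measurable
    · exact (Real.continuous_rpow_const hα.le).measurable
  simp only [phi]
  rw [lintegral_tsum hmeas]
  have hterm : ∀ m : ℕ,
      ∫⁻ t in Set.Ioi 0, ENNReal.ofReal
        ((1 - Real.cos (k * ((m:ℝ) + 1))) * Real.exp (-(t * ((m:ℝ) + 1))) * t ^ α)
      = ENNReal.ofReal ((1 - Real.cos (k * ((m:ℝ) + 1)))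
          * ((1 / ((m:ℝ) + 1)) ^ (1 + α) * Real.Gamma (1 + α))) := by
    intro m
    apply lint_term α hα
    · have := Real.cos_le_one (k * ((m:ℝ) + 1)); linarith
    · positivity
  rw [tsum_congr hterm]
  have hsum2 : Summable (fun m : ℕ => (1 - Real.cos (k * ((m:ℝ) + 1)))
      * ((1 / ((m:ℝ) + 1)) ^ (1 + α) * Real.Gamma (1 + α))) := by
    apply ((summable_wt α k hα).mul_left (Real.Gamma (1 + α))).congr
    intro m
    rw [Real.div_rpow zero_le_one (by positivity), Real.one_rpow]
    push_cast
    ring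
  rw [← ENNReal.ofReal_tsum_of_nonneg (fun m => ?_) hsum2]
  · congr 1
    rw [wt, ← tsum_mul_left]
    apply tsum_congr
    intro m
    rw [Real.div_rpow zero_le_one (by positivity), Real.one_rpow]
    push_cast
    ring
  · have h1 := Real.cos_le_one (k * ((m:ℝ) + 1))
    have h2 : (0:ℝ) < ((m:ℝ) + 1) ^ (1 + α) := by positivity
    have h3 := Real.Gamma_pos_of_pos (show (0:ℝ) < 1 + α by linarith)
    have h4 : (0:ℝ) ≤ (1 / ((m:ℝ) + 1)) ^ (1 + α) := Real.rpow_nonneg (by positivity) _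
    exact mul_nonneg (by linarith) (mul_nonneg h4 h3.le)

lemma wt_strict_mono (α : ℝ) (hα : 0 < α) {k1 k2 : ℝ} (h0 : 0 ≤ k1) (h12 : k1 < k2)
    (h2 : k2 ≤ Real.pi) : wt α k1 < wt α k2 := by
  have hΓ : 0 < Real.Gamma (1 + α) := Real.Gamma_pos_of_pos (by linarith)
  have hptwise : ∀ t ∈ Set.Ioi (0:ℝ), phi α k1 t < phi α k2 t := by
    intro t ht
    rw [Set.mem_Ioi] at ht
    rw [phi_eq α k1 t hα ht, phi_eq α k2 t hα ht]
    have htα : 0 < t ^ α := Real.rpow_pos_of_pos ht α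
    have hF : Fk k1 t * t ^ α < Fk k2 t * t ^ α :=
      mul_lt_mul_of_pos_right (Fk_lt t h0 h12 h2 ht) htα
    have hnn : 0 ≤ Fk k1 t * t ^ α := by
      apply mul_nonneg _ htα.le
      apply tsum_nonneg
      intro m
      have := Real.cos_le_one (k1 * ((m:ℝ) + 1))
      have := (Real.exp_pos (-(t * ((m:ℝ) + 1)))).le
      nlinarith
    exact (ENNReal.ofReal_lt_ofReal_iff_of_nonneg hnn).2 hF
  have hlt : ∫⁻ t in Set.Ioi 0, phi α k1 t < ∫⁻ t in Set.Ioi 0, phi α k2 t := by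
    apply setLIntegral_strict_mono measurableSet_Ioi
    · simp [Real.volume_Ioi]
    · exact measurable_phi α k2 hα
    · rw [lint_phi α k1 hα]; exact ENNReal.ofReal_ne_top
    · exact Filter.Eventually.of_forall hptwise
  rw [lint_phi α k1 hα, lint_phi α k2 hα] at hlt
  have := (ENNReal.ofReal_lt_ofReal_iff_of_nonneg
    (mul_nonneg hΓ.le (wt_nonneg α k1))).1 hlt
  exact lt_of_mul_lt_mul_left this hΓ.le

end OmAux

/-- For `0 < A < A₀` there is a unique `k_max ∈ (0,π)` with `w̃(k_max) = A²/(2ε)`, and `Ω²`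
is minimized over `[−π,π]` at `k = ±k_max` with minimal value `−A⁴`. -/
theorem Om2_min_small_amplitude (α ε A : ℝ) (hα : 0 < α) (hε : 0 < ε) (hA : 0 < A)
    (hAA0 : A < A0 α ε) :
    ∃ kmax : ℝ, kmax ∈ Set.Ioo 0 Real.pi ∧ wt α kmax = A ^ 2 / (2 * ε) ∧
      (∀ k' ∈ Set.Ioo 0 Real.pi, wt α k' = A ^ 2 / (2 * ε) → k' = kmax) ∧
      (∀ k ∈ Set.Icc (-Real.pi) Real.pi, Om2 α ε A kmax ≤ Om2 α ε A k) ∧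
      Om2 α ε A kmax = Om2 α ε A (-kmax) ∧
      Om2 α ε A kmax = -A ^ 4 := by
  have hs : (1:ℝ) < 1 + α := by linarith
  have hζ := OmAux.zetaR_pos hs
  have hwtπ := OmAux.wt_pi α hα
  have h2s : (0:ℝ) < 1 - (2:ℝ) ^ (-(1+α)) := by
    have : (2:ℝ) ^ (-(1+α)) < 1 :=
      Real.rpow_lt_one_of_one_lt_of_neg one_lt_two (by linarith)
    linarith
  rw [A0] at hAA0
  have hX : A ^ 2 < 4 * ε * (1 - (2:ℝ) ^ (-(1+α))) * zetaR (1+α) :=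
    (Real.lt_sqrt hA.le).1 hAA0
  have hT1 : 0 < A ^ 2 / (2 * ε) := by positivity
  have hT2 : A ^ 2 / (2 * ε) < wt α Real.pi := by
    rw [hwtπ, div_lt_iff₀ (by positivity)]
    nlinarith
  have hcont : ContinuousOn (wt α) (Set.Icc 0 Real.pi) :=
    (OmAux.continuous_wt α hα).continuousOn
  have hmem : A ^ 2 / (2 * ε) ∈ Set.Ioo (wt α 0) (wt α Real.pi) := by
    rw [OmAux.wt_zero]
    exact ⟨hT1, hT2⟩
  obtain ⟨kmax, hk, hkval⟩ := intermediate_value_Ioo (le_of_lt Real.pi_pos) hcont hmem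
  have hε' : (2:ℝ) * ε ≠ 0 := by positivity
  have hOmval : Om2 α ε A kmax = -A ^ 4 := by
    rw [Om2, hkval]
    field_simp
    ring
  refine ⟨kmax, hk, hkval, ?_, ?_, ?_, hOmval⟩
  · intro k' hk' hval'
    by_contra hne
    rcases lt_or_gt_of_ne hne with h | h
    · have := OmAux.wt_strict_mono α hα (le_of_lt hk'.1) h (le_of_lt hk.2)
      rw [hval', hkval] at this
      exact lt_irrefl _ this
    · have := OmAux.wt_strict_mono α hα (le_of_lt hk.1) h (le_of_lt hk'.2)
      rw [hval', hkval] at this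
      exact lt_irrefl _ this
  · intro k hkk
    rw [hOmval, Om2]
    nlinarith [sq_nonneg (2 * ε * wt α k - A ^ 2)]
  · rw [Om2, Om2, OmAux.wt_neg]
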